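/- Base case of the previous lemma: for k ≥ 2, there exist k distinct points z_i = (x_i, y_i) ∈ B × F with x_1 + ⋯ + x_k = o_B, y_1 + ⋯ + y_k ≠ o_F, the y_i pairwise distinct, and all x_i ≠ o_B; for any such configuration Z, no nonzero section of O(kσ + f) vanishes on Z. -/
import Mathlib


/-- base case of Lemma on generic vanishing: for `k ≥ 2` there
exist `k` distinct points `zᵢ = (xᵢ, yᵢ) ∈ B × F` with `x₁ + ⋯ + x_k = o_B`,
`y₁ + ⋯ + y_k ≠ o_F`, the `yᵢ` pairwise distinct and all `xᵢ ≠ o_B`; and for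
any such configuration no nonzero section of `O(kσ + f)` vanishes on it.
Context (hypothesis `hdiv`): every nonzero section of `O(kσ + f)` vanishes
exactly along a divisor `⊔ᵢ (B × yᵢ) ∪ f` with `y₁ + ⋯ + y_k = o_F`. -/
theorem statement6
    (B F : Type) [AddCommGroup B] [AddCommGroup F]
    [Infinite B] [Infinite F]
    (k : ℕ) (hk : 2 ≤ k)
    (Sec : Type) [AddCommGroup Sec] [Module ℂ Sec]
    (ev : Sec →ₗ[ℂ] (B × F → ℂ))
    (hdiv : ∀ s : Sec, s ≠ 0 → ∃ Y : Multiset F, Multiset.card Y = k ∧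
      Y.sum = 0 ∧ ∀ p : B × F, ev s p = 0 ↔ (p.2 ∈ Y ∨ p.1 = 0)) :
    (∃ z : Fin k → B × F, Function.Injective z ∧
        (∑ i, (z i).1) = 0 ∧ (∑ i, (z i).2) ≠ 0 ∧
        Function.Injective (fun i => (z i).2) ∧ ∀ i, (z i).1 ≠ 0) ∧
    (∀ z : Fin k → B × F, Function.Injective z →
        (∑ i, (z i).1) = 0 → (∑ i, (z i).2) ≠ 0 →
        Function.Injective (fun i => (z i).2) → (∀ i, (z i).1 ≠ 0) →
        ∀ s : Sec, (∀ i, ev s (z i) = 0) → s = 0) := by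
  classical
  haveI : NeZero k := ⟨by omega⟩
  constructor
  · -- existence
    have h10 : (1 : Fin k) ≠ 0 := by
      intro h
      have := congrArg Fin.val h
      rw [Fin.val_one'] at this
      simp at this
      omega
    let eB : Fin k ↪ B := Fin.valEmbedding.trans (Infinite.natEmbedding B)
    let eF : Fin k ↪ F := Fin.valEmbedding.trans (Infinite.natEmbedding F)
    obtain ⟨c, hc⟩ := Infinite.exists_notMem_finset
      ((Finset.univ.image (fun i : Fin k => eF i)) ∪
        {-(∑ i ∈ ({0}ᶜ : Finset (Fin k)), eF i)})
    simp only [Finset.mem_union, Finset.mem_image, Finset.mem_singleton, not_or, not_exists] at hc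
    obtain ⟨hc1, hc2⟩ := hc
    set y : Fin k → F := fun i => if i = 0 then c else eF i with hy
    have hcne : ∀ j : Fin k, c ≠ eF j := fun j h => (hc1 j) ⟨Finset.mem_univ j, h.symm⟩
    have hyinj : Function.Injective y := by
      intro i j h
      by_cases hi : i = 0 <;> by_cases hj : j = 0 <;> simp [hy, hi, hj] at h ⊢
      · exact absurd h (hcne j)
      · exact absurd h.symm (hcne i)
      · exact h
    refine ⟨fun i => (eB i - eB (i + 1), y i), ?_, ?_, ?_, ?_, ?_⟩
    · intro i j h
      exact hyinj (congrArg Prod.snd h)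
    · simp only
      rw [Finset.sum_sub_distrib]
      rw [sub_eq_zero]
      exact (Fintype.sum_equiv (Equiv.addRight (1 : Fin k))
        (fun i => eB (i + 1)) (fun i => eB i) (fun i => rfl)).symm
    · simp only
      rw [Fintype.sum_eq_add_sum_compl 0]
      have : ∑ i ∈ ({0}ᶜ : Finset (Fin k)), y i = ∑ i ∈ ({0}ᶜ : Finset (Fin k)), eF i := by
        refine Finset.sum_congr rfl (fun i hi => ?_)
        simp only [Finset.mem_compl, Finset.mem_singleton] at hi
        simp [hy, hi]
      rw [this]
      simp only [hy, if_pos rfl]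
      intro h
      exact hc2 (eq_neg_of_add_eq_zero_left h)
    · intro i j h
      exact hyinj h
    · intro i
      simp only [sub_ne_zero]
      intro h
      have := eB.injective h
      exact h10 (by
        have := congrArg (· - i) this
        simpa using this.symm)
  · intro z hz hsx hsy hy hx s hvan
    by_contra hs
    obtain ⟨Y, hcard, hsum, hiff⟩ := hdiv s hs
    have hmem : ∀ i, (z i).2 ∈ Y := by
      intro i
      rcases (hiff (z i)).1 (hvan i) with h | h
      · exact h
      · exact absurd h (hx i)
    set M : Multiset F := Finset.univ.val.map (fun i => (z i).2) with hM
    have hnodup : M.Nodup := Multiset.Nodup.map hy Finset.univ.nodup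
    have hsub : M ⊆ Y := by
      intro a ha
      simp only [hM, Multiset.mem_map, Finset.mem_val] at ha
      obtain ⟨i, _, rfl⟩ := ha
      exact hmem i
    have hle : M ≤ Y := (Multiset.le_iff_subset hnodup).2 hsub
    have hMcard : Multiset.card M = k := by
      simp [hM]
    have heq : M = Y := Multiset.eq_of_le_of_card_le hle (by rw [hcard, hMcard])
    have : M.sum = 0 := heq ▸ hsum
    exact hsy (by rwa [hM] at this)
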